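/- (Relation between the Hessian of an f-divergence and the Fisher information.) Let f: ℝ_{≥0} → ℝ be convex, twice differentiable, with f(1) = 0 and f'(1) = 0, and let P(·|γ) be a family of probability distributions on 𝒳 such that each map γ ↦ P(x|γ) is twice differentiable. Then for every γ, the function φ ↦ D_f[P(·|γ), P(·|φ)] is twice differentiable at φ = γ and d²/dφ² D_f[P(·|γ), P(·|φ)] |_{φ=γ} = f''(1) · F(γ). -/

import Mathlib

open Finset Real

/-- the Hessian (second derivative) of an f-divergence along the family
equals `f''(1)·F(γ)`. -/
theorem stmt10 {X : Type*} [Fintype X] [Nonempty X]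
    (I : Set ℝ) (hIopen : IsOpen I) (hIconn : I.OrdConnected)
    (P : ℝ → X → ℝ)
    (hpos : ∀ γ ∈ I, ∀ x : X, 0 < P γ x)
    (hsum : ∀ γ ∈ I, ∑ x : X, P γ x = 1)
    (hd1 : ∀ x : X, ∀ γ ∈ I, DifferentiableAt ℝ (fun t => P t x) γ)
    (hd2 : ∀ x : X, ∀ γ ∈ I, DifferentiableAt ℝ (deriv (fun t => P t x)) γ)
    (f : ℝ → ℝ) (hconv : ConvexOn ℝ (Set.Ici 0) f)
    (hf1 : f 1 = 0) (hf'1 : deriv f 1 = 0)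
    (hfd1 : ∀ t : ℝ, 0 < t → DifferentiableAt ℝ f t)
    (hfd2 : ∀ t : ℝ, 0 < t → DifferentiableAt ℝ (deriv f) t)
    (γ : ℝ) (hγ : γ ∈ I) :
    DifferentiableAt ℝ (deriv (fun φ => ∑ x : X, P φ x * f (P γ x / P φ x))) γ ∧
    deriv (deriv (fun φ => ∑ x : X, P φ x * f (P γ x / P φ x))) γ
      = deriv (deriv f) 1 * (∑ x : X, (deriv (fun t => P t x) γ) ^ 2 / P γ x) := by
  classical
  set h : X → ℝ → ℝ := fun x φ =>
    deriv (fun t => P t x) φ *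
      (f (P γ x / P φ x) - (P γ x / P φ x) * deriv f (P γ x / P φ x)) with hh
  -- derivative of each summand for φ ∈ I
  have key : ∀ φ ∈ I, ∀ x : X,
      HasDerivAt (fun t => P t x * f (P γ x / P t x)) (h x φ) φ := by
    intro φ hφ x
    have hPpos := hpos φ hφ x
    have hP : HasDerivAt (fun t => P t x) (deriv (fun t => P t x) φ) φ :=
      (hd1 x φ hφ).hasDerivAt
    have hu : HasDerivAt (fun t => P γ x / P t x)
        ((0 * P φ x - P γ x * deriv (fun t => P t x) φ) / (P φ x) ^ 2) φ :=
      (hasDerivAt_const φ (P γ x)).div hP hPpos.ne'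
    have hupos : 0 < P γ x / P φ x := div_pos (hpos γ hγ x) hPpos
    have hf : HasDerivAt f (deriv f (P γ x / P φ x)) (P γ x / P φ x) :=
      (hfd1 _ hupos).hasDerivAt
    have hcomp := hf.comp φ hu
    have hmul := hP.mul hcomp
    refine hmul.congr_deriv ?_
    simp only [hh, Function.comp]
    field_simp
    ring
  have hsumD : ∀ φ ∈ I, HasDerivAt (fun t => ∑ x : X, P t x * f (P γ x / P t x))
      (∑ x : X, h x φ) φ := by
    intro φ hφ
    exact HasDerivAt.fun_sum fun x _ => key φ hφ x
  have hU : I ∈ nhds γ := hIopen.mem_nhds hγ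
  have hEq : deriv (fun φ => ∑ x : X, P φ x * f (P γ x / P φ x))
      =ᶠ[nhds γ] fun φ => ∑ x : X, h x φ := by
    filter_upwards [hU] with φ hφ
    exact (hsumD φ hφ).deriv
  -- derivative of each h x at γ
  have key2 : ∀ x : X, HasDerivAt (h x)
      (deriv (deriv f) 1 * (deriv (fun t => P t x) γ) ^ 2 / P γ x) γ := by
    intro x
    have hPpos := hpos γ hγ x
    have hself : P γ x / P γ x = 1 := div_self hPpos.ne'
    have hP : HasDerivAt (fun t => P t x) (deriv (fun t => P t x) γ) γ :=
      (hd1 x γ hγ).hasDerivAt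
    have hP' : HasDerivAt (deriv (fun t => P t x))
        (deriv (deriv (fun t => P t x)) γ) γ := (hd2 x γ hγ).hasDerivAt
    have hu : HasDerivAt (fun φ => P γ x / P φ x)
        ((0 * P γ x - P γ x * deriv (fun t => P t x) γ) / (P γ x) ^ 2) γ :=
      (hasDerivAt_const γ (P γ x)).div hP hPpos.ne'
    have hf : HasDerivAt f (deriv f (P γ x / P γ x)) (P γ x / P γ x) := by
      rw [hself]; exact (hfd1 1 one_pos).hasDerivAt
    have hf' : HasDerivAt (deriv f) (deriv (deriv f) (P γ x / P γ x)) (P γ x / P γ x) := by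
      rw [hself]; exact (hfd2 1 one_pos).hasDerivAt
    have h1 := hf.comp γ hu
    have h2 := hf'.comp γ hu
    have h3 := hu.mul h2
    have h4 := h1.sub h3
    have h5 := hP'.mul h4
    refine h5.congr_deriv ?_
    simp only [hself, hf1, hf'1, Function.comp, Pi.sub_apply, Pi.mul_apply]
    field_simp
    ring
  have hsum2 : HasDerivAt (fun φ => ∑ x : X, h x φ)
      (∑ x : X, deriv (deriv f) 1 * (deriv (fun t => P t x) γ) ^ 2 / P γ x) γ :=
    HasDerivAt.fun_sum fun x _ => key2 x
  constructor
  · exact (Filter.EventuallyEq.differentiableAt_iff hEq).mpr hsum2.differentiableAt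
  · rw [hEq.deriv_eq, hsum2.deriv, Finset.mul_sum]
    exact Finset.sum_congr rfl fun x _ => by rw [mul_div_assoc]
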